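/- Let p ≥ 1 be an integer and q a nonzero integer, and let G = ⟨a, b, t ∣ t a^p t⁻¹ = b⁻¹ a^p, t b^{-q} a⁻¹ t⁻¹ = b^{-q}⟩ be the group with this presentation (the Lin presentation of the genus one two-bridge knot group of C[2p, 2q]), where b^{-q} is interpreted as an integer power. Then, with commutator convention [x,y] = x⁻¹y⁻¹xy, the following hold: t^p a^p ∈ ⟨⟨t⟩⟩⁺, b^q t^p b^{-q} a^{-p} ∈ ⟨⟨t⟩⟩⁺, and t^{2p}[b^q, a^p] ∈ ⟨⟨t⟩⟩⁺. -/

import Mathlib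

/-- `⟨⟨g⟩⟩⁺`: the set of all non-empty finite products of conjugates of `g`. -/
def conjProdSet {G : Type*} [Group G] (g : G) : Set G :=
  {a | ∃ xs : List G, xs ≠ [] ∧ (xs.map (fun x => x * g * x⁻¹)).prod = a}

/-- The commutator, with the convention `[x,y] = x⁻¹y⁻¹xy`. -/
def com {G : Type*} [Group G] (x y : G) : G := x⁻¹ * y⁻¹ * x * y

/-- Relators of the Lin presentation
`⟨a, b, t ∣ t a^p t⁻¹ = b⁻¹ a^p, t b^{-q} a⁻¹ t⁻¹ = b^{-q}⟩`
of the genus one two-bridge knot group of `C[2p, 2q]`;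
generator `0` is `a`, generator `1` is `b`, generator `2` is `t`. -/
def linRels (p q : ℤ) : Set (FreeGroup (Fin 3)) :=
  { FreeGroup.of 2 * FreeGroup.of 0 ^ p * (FreeGroup.of 2)⁻¹ *
      ((FreeGroup.of 1)⁻¹ * FreeGroup.of 0 ^ p)⁻¹,
    FreeGroup.of 2 * FreeGroup.of 1 ^ (-q) * (FreeGroup.of 0)⁻¹ *
      (FreeGroup.of 2)⁻¹ * (FreeGroup.of 1 ^ (-q))⁻¹ }

namespace CPSAux
variable {G : Type*} [Group G]

lemma conj_mem (t g : G) : g * t * g⁻¹ ∈ conjProdSet t :=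
  ⟨[g], by simp, by simp⟩

lemma self_mem (t : G) : t ∈ conjProdSet t :=
  ⟨[1], by simp, by simp⟩

lemma mul_mem {t x y : G} (hx : x ∈ conjProdSet t) (hy : y ∈ conjProdSet t) :
    x * y ∈ conjProdSet t := by
  obtain ⟨xs, hxs, hx⟩ := hx
  obtain ⟨ys, hys, hy⟩ := hy
  exact ⟨xs ++ ys, by simp [hxs], by simp [hx, hy]⟩

lemma conj_prod (t g : G) : ∀ xs : List G,
    ((xs.map (fun x => g * x)).map (fun x => x * t * x⁻¹)).prod
      = g * (xs.map (fun x => x * t * x⁻¹)).prod * g⁻¹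
  | [] => by simp
  | y :: ys => by
      simp only [List.map_cons, List.prod_cons, conj_prod t g ys]
      group

lemma conj_mem' {t x : G} (g : G) (hx : x ∈ conjProdSet t) :
    g * x * g⁻¹ ∈ conjProdSet t := by
  obtain ⟨xs, hxs, hx⟩ := hx
  exact ⟨xs.map (fun x => g * x), by simpa using hxs, by rw [conj_prod, hx]⟩

lemma lemA {t a : G} (h : t * a ∈ conjProdSet t) :
    ∀ n : ℕ, t ^ (n + 1) * a ^ (n + 1) ∈ conjProdSet t
  | 0 => by simpa using h
  | n + 1 => by
      have key := mul_mem (conj_mem' (t ^ (n + 1)) h) (lemA h n)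
      have eq : t ^ (n + 1) * (t * a) * (t ^ (n + 1))⁻¹ * (t ^ (n + 1) * a ^ (n + 1))
          = t ^ (n + 1 + 1) * a ^ (n + 1 + 1) := by group
      rwa [eq] at key

lemma lemB (t a : G) :
    ∀ n : ℕ, (t * a) ^ (n + 1) * (a ^ (n + 1))⁻¹ ∈ conjProdSet t
  | 0 => by simpa using self_mem t
  | n + 1 => by
      have key := mul_mem (lemB t a n) (conj_mem t (a ^ (n + 1)))
      have eq : (t * a) ^ (n + 1) * (a ^ (n + 1))⁻¹ * (a ^ (n + 1) * t * (a ^ (n + 1))⁻¹)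
          = (t * a) ^ (n + 1 + 1) * (a ^ (n + 1 + 1))⁻¹ := by
        rw [pow_succ (t * a) (n + 1), pow_succ a (n + 1)]; group
      rwa [eq] at key

end CPSAux

/-- In the Lin presentation of the genus one two-bridge knot group of
`C[2p, 2q]` (`p ≥ 1`, `q ≠ 0`), one has `t^p a^p ∈ ⟨⟨t⟩⟩⁺`,
`b^q t^p b^{-q} a^{-p} ∈ ⟨⟨t⟩⟩⁺` and `t^{2p}[b^q, a^p] ∈ ⟨⟨t⟩⟩⁺`. -/
theorem linPresentation_mem_conjProdSet (p q : ℤ) (hp : 1 ≤ p) (hq : q ≠ 0) :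
    letI G := PresentedGroup (linRels p q)
    letI a : G := PresentedGroup.of 0
    letI b : G := PresentedGroup.of 1
    letI t : G := PresentedGroup.of 2
    t ^ p * a ^ p ∈ conjProdSet t ∧
    b ^ q * t ^ p * b ^ (-q) * a ^ (-p) ∈ conjProdSet t ∧
    t ^ (2 * p) * com (b ^ q) (a ^ p) ∈ conjProdSet t := by
  set G := PresentedGroup (linRels p q) with hG
  set a : G := PresentedGroup.of 0 with hA
  set b : G := PresentedGroup.of 1 with hB
  set t : G := PresentedGroup.of 2 with hT
  -- the second relator holds in G
  have hrel : (FreeGroup.of 2 * FreeGroup.of 1 ^ (-q) * (FreeGroup.of 0)⁻¹ *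
      (FreeGroup.of 2)⁻¹ * ((FreeGroup.of 1 : FreeGroup (Fin 3)) ^ (-q))⁻¹) ∈ linRels p q := by
    right; rfl
  have h2 : t * b ^ (-q) * a⁻¹ * t⁻¹ * (b ^ (-q))⁻¹ = 1 := by
    have : ((QuotientGroup.mk' (Subgroup.normalClosure (linRels p q)))
        (FreeGroup.of 2 * FreeGroup.of 1 ^ (-q) * (FreeGroup.of 0)⁻¹ *
          (FreeGroup.of 2)⁻¹ * ((FreeGroup.of 1 : FreeGroup (Fin 3)) ^ (-q))⁻¹)) = 1 := by
      rw [QuotientGroup.mk'_apply, QuotientGroup.eq_one_iff]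
      exact Subgroup.subset_normalClosure hrel
    simp only [map_mul, map_inv, map_zpow] at this
    exact this
  -- derive t * a = b^q * t * b^(-q)
  have h2' : t * b ^ (-q) * a⁻¹ * t⁻¹ = b ^ (-q) := mul_inv_eq_one.mp h2
  have ha : a⁻¹ = b ^ q * t⁻¹ * b ^ (-q) * t := by
    rw [← h2']; group
  have ta_eq : t * a = b ^ q * t * b ^ (-q) := by
    rw [← inv_inv a, ha]; group
  have hta : t * a ∈ conjProdSet t := by
    rw [ta_eq, show b ^ (-q) = (b ^ q)⁻¹ from zpow_neg b q]
    exact CPSAux.conj_mem t (b ^ q)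
  -- natural number version of p
  obtain ⟨n, hn⟩ : ∃ n : ℕ, p = (n : ℤ) + 1 := by
    refine ⟨(p - 1).toNat, ?_⟩
    omega
  have hcast : p = ((n + 1 : ℕ) : ℤ) := by push_cast; omega
  have hpow : ∀ x : G, x ^ p = x ^ (n + 1) := by
    intro x
    rw [← zpow_natCast x (n + 1), ← hcast]
  have h1 : t ^ p * a ^ p ∈ conjProdSet t := by
    rw [hpow, hpow]; exact CPSAux.lemA hta n
  have hconjpow : b ^ q * t ^ p * b ^ (-q) = (t * a) ^ (n + 1) := by
    rw [ta_eq, hpow, show b ^ (-q) = (b ^ q)⁻¹ from zpow_neg b q]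
    rw [show b ^ q * t * (b ^ q)⁻¹ = (MulAut.conj (b ^ q)) t from rfl, ← map_pow]
    rfl
  have h2m : b ^ q * t ^ p * b ^ (-q) * a ^ (-p) ∈ conjProdSet t := by
    have : a ^ (-p) = (a ^ (n + 1))⁻¹ := by rw [← hpow, zpow_neg]
    rw [this, hconjpow]
    exact CPSAux.lemB t a n
  refine ⟨h1, h2m, ?_⟩
  have key := CPSAux.mul_mem
    (CPSAux.conj_mem' (t ^ p) (CPSAux.conj_mem' (b ^ (-q)) h2m)) h1
  have eq : t ^ p * (b ^ (-q) * (b ^ q * t ^ p * b ^ (-q) * a ^ (-p)) * (b ^ (-q))⁻¹) * (t ^ p)⁻¹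
      * (t ^ p * a ^ p) = t ^ (2 * p) * com (b ^ q) (a ^ p) := by
    unfold com
    group
  rwa [eq] at key
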